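/- Let r ∈ ℂ with Re(r) > 0. Then the partial derivative of A_D(α;γ) with respect to α, evaluated at α = γ = r, equals A_D'(r;r) = Σ_{P monic irreducible} log|P| / ( (|P|^{1+2r} − 1)(|P| + 1) ), the series converging absolutely. -/

import Mathlib

/-- The local factor of the Euler product
`A_D(α;γ) = ∏_P (1−|P|^{-(1+α+γ)})⁻¹(1 − 1/((|P|+1)|P|^{1+2α}) − 1/((|P|+1)|P|^{α+γ}))`,
with `|P|^w = exp(w·deg P·log q)`. -/
noncomputable def ADlocal (Fq : Type*) [Field Fq] [Fintype Fq] (a g : ℂ)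
    (P : Polynomial Fq) : ℂ :=
  (1 - Complex.exp (-(1 + a + g) * ((P.natDegree : ℂ) * Real.log (Fintype.card Fq))))⁻¹ *
    (1 - ((((Fintype.card Fq : ℝ) ^ P.natDegree : ℝ) : ℂ) + 1)⁻¹ *
        Complex.exp (-(1 + 2 * a) * ((P.natDegree : ℂ) * Real.log (Fintype.card Fq))) -
      ((((Fintype.card Fq : ℝ) ^ P.natDegree : ℝ) : ℂ) + 1)⁻¹ *
        Complex.exp (-(a + g) * ((P.natDegree : ℂ) * Real.log (Fintype.card Fq))))

/-- The Euler product `A_D(α;γ)`. -/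
noncomputable def AD (Fq : Type*) [Field Fq] [Fintype Fq] (a g : ℂ) : ℂ :=
  ∏' P : {P : Polynomial Fq // P.Monic ∧ Irreducible P}, ADlocal Fq a g P.1

open Complex

noncomputable section AuxDefs

/-- `c = d·log q` as a complex number. -/
def cD (q d : ℕ) : ℂ := (d : ℂ) * Real.log q

/-- `t = d·log q` as a real number. -/
def tR (q d : ℕ) : ℝ := (d : ℝ) * Real.log q

/-- `n = q^d` as a real number. -/
def nR (q d : ℕ) : ℝ := (q : ℝ) ^ d

/-- `N = q^d` as a complex number (cast from the real power). -/
def nC (q d : ℕ) : ℂ := (((q : ℝ) ^ d : ℝ) : ℂ)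

/-- Normalized local factor `G(a) = 1 + u(a)⁻¹ (E₃(a) − E₄(a)) / (N(N+1))`. -/
def Gl (q d : ℕ) (r a : ℂ) : ℂ :=
  1 + (1 - Complex.exp (-(1 + a + r) * cD q d))⁻¹ *
      (Complex.exp (-(a + r) * cD q d) - Complex.exp (-(2 * a) * cD q d)) *
      ((nC q d)⁻¹ * (nC q d + 1)⁻¹)

/-- Derivative (in `a`) of `Gl q d r`. -/
def Dl (q d : ℕ) (r a : ℂ) : ℂ :=
  (-(cD q d * Complex.exp (-(1 + a + r) * cD q d)) / (1 - Complex.exp (-(1 + a + r) * cD q d)) ^ 2 *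
      (Complex.exp (-(a + r) * cD q d) - Complex.exp (-(2 * a) * cD q d)) +
    (1 - Complex.exp (-(1 + a + r) * cD q d))⁻¹ *
      (2 * cD q d * Complex.exp (-(2 * a) * cD q d) -
        cD q d * Complex.exp (-(a + r) * cD q d))) *
      ((nC q d)⁻¹ * (nC q d + 1)⁻¹)

end AuxDefs

section Helpers

variable {q d : ℕ}

lemma one_lt_qR (hq : 2 ≤ q) : (1 : ℝ) < q := by exact_mod_cast Nat.lt_of_lt_of_le one_lt_two hq

lemma L_pos (hq : 2 ≤ q) : 0 < Real.log q := Real.log_pos (one_lt_qR hq)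

lemma tR_pos (hq : 2 ≤ q) (hd : 1 ≤ d) : 0 < tR q d := by
  have := L_pos hq
  have hd' : (0:ℝ) < d := by exact_mod_cast hd
  exact mul_pos hd' this

lemma nR_pos (hq : 2 ≤ q) : 0 < nR q d := by
  have : (0:ℝ) < q := lt_trans one_pos (one_lt_qR hq)
  exact pow_pos this d

lemma two_le_nR (hq : 2 ≤ q) (hd : 1 ≤ d) : 2 ≤ nR q d := by
  have h2 : (2:ℝ) ≤ q := by exact_mod_cast hq
  calc (2:ℝ) ≤ (q:ℝ) := h2
    _ = (q:ℝ) ^ 1 := (pow_one _).symm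
    _ ≤ (q:ℝ) ^ d := pow_le_pow_right₀ (le_trans one_le_two h2) hd

lemma exp_tR (hq : 2 ≤ q) : Real.exp (tR q d) = nR q d := by
  have hq0 : (0:ℝ) < q := lt_trans one_pos (one_lt_qR hq)
  rw [tR, nR]
  rw [show (d : ℝ) * Real.log q = Real.log ((q:ℝ) ^ d) by rw [Real.log_pow]]
  exact Real.exp_log (pow_pos hq0 d)

lemma cD_eq : cD q d = ((tR q d : ℝ) : ℂ) := by
  simp [cD, tR]

lemma exp_cD (hq : 2 ≤ q) : Complex.exp (cD q d) = nC q d := by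
  rw [cD_eq, ← Complex.ofReal_exp, exp_tR hq, nR, nC]

lemma nC_ne (hq : 2 ≤ q) : nC q d ≠ 0 := by
  have := nR_pos (d := d) hq
  simp only [nC, ne_eq, Complex.ofReal_eq_zero]
  exact ne_of_gt this

lemma norm_nC (hq : 2 ≤ q) : ‖nC q d‖ = nR q d := by
  rw [nC, Complex.norm_real, Real.norm_eq_abs]
  exact abs_of_pos (nR_pos hq)

lemma m_ne (hq : 2 ≤ q) : nC q d + 1 ≠ 0 := by
  have := nR_pos (d := d) (q := q) hq
  intro h
  have : ((nR q d + 1 : ℝ) : ℂ) = 0 := by push_cast [nC, nR] at h ⊢; linear_combination h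
  rw [Complex.ofReal_eq_zero] at this
  linarith

lemma norm_m_inv_le (hq : 2 ≤ q) : ‖(nC q d + 1)⁻¹‖ ≤ (nR q d)⁻¹ := by
  have hn := nR_pos (d := d) (q := q) hq
  have : (nC q d + 1) = ((nR q d + 1 : ℝ) : ℂ) := by push_cast [nC, nR]; ring
  rw [this, norm_inv, Complex.norm_real, Real.norm_eq_abs, abs_of_pos (by linarith)]
  rw [inv_le_inv₀ (by linarith) hn]
  linarith

lemma norm_exp_mul_cD (z : ℂ) : ‖Complex.exp (z * cD q d)‖ = Real.exp (z.re * tR q d) := by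
  rw [cD_eq, Complex.norm_exp]
  congr 1
  simp [Complex.mul_re]

end Helpers

section Bounds

variable {q d : ℕ} {r a : ℂ}

lemma norm_E1_le (hq : 2 ≤ q) (hd : 1 ≤ d) (ha : 0 ≤ a.re) (hr : 0 ≤ r.re) :
    ‖Complex.exp (-(1 + a + r) * cD q d)‖ ≤ (nR q d)⁻¹ := by
  rw [norm_exp_mul_cD]
  have ht := (tR_pos hq hd).le
  have h1 : (-(1 + a + r)).re ≤ -1 := by
    simp only [Complex.neg_re, Complex.add_re, Complex.one_re]
    linarith
  calc Real.exp ((-(1 + a + r)).re * tR q d)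
      ≤ Real.exp ((-1) * tR q d) := by
        apply Real.exp_le_exp.2
        apply mul_le_mul_of_nonneg_right h1 ht
    _ = (Real.exp (tR q d))⁻¹ := by rw [neg_one_mul, Real.exp_neg]
    _ = (nR q d)⁻¹ := by rw [exp_tR hq]

lemma norm_E3_le (hq : 2 ≤ q) (hd : 1 ≤ d) (ha : 0 ≤ a.re) (hr : 0 ≤ r.re) :
    ‖Complex.exp (-(a + r) * cD q d)‖ ≤ 1 := by
  rw [norm_exp_mul_cD, Real.exp_le_one_iff]
  have ht := (tR_pos hq hd).le
  have h1 : (-(a + r)).re ≤ 0 := by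
    simp only [Complex.neg_re, Complex.add_re]; linarith
  exact mul_nonpos_of_nonpos_of_nonneg h1 ht

lemma norm_E4_le (hq : 2 ≤ q) (hd : 1 ≤ d) (ha : 0 ≤ a.re) :
    ‖Complex.exp (-(2 * a) * cD q d)‖ ≤ 1 := by
  rw [norm_exp_mul_cD, Real.exp_le_one_iff]
  have ht := (tR_pos hq hd).le
  have h1 : (-(2 * a)).re ≤ 0 := by
    have : (-(2 * a)).re = -(2 * a.re) := by simp [Complex.mul_re]
    rw [this]; linarith
  exact mul_nonpos_of_nonpos_of_nonneg h1 ht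

lemma nR_inv_le_half (hq : 2 ≤ q) (hd : 1 ≤ d) : (nR q d)⁻¹ ≤ 1/2 := by
  have h2 := two_le_nR hq hd
  rw [inv_le_comm₀ (by linarith) (by norm_num)]
  linarith

lemma norm_u_lb (hq : 2 ≤ q) (hd : 1 ≤ d) (ha : 0 ≤ a.re) (hr : 0 ≤ r.re) :
    1/2 ≤ ‖1 - Complex.exp (-(1 + a + r) * cD q d)‖ := by
  have h1 := norm_E1_le (r := r) (a := a) hq hd ha hr
  have h2 := nR_inv_le_half hq hd
  calc (1:ℝ)/2 = 1 - 1/2 := by norm_num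
    _ ≤ 1 - ‖Complex.exp (-(1 + a + r) * cD q d)‖ := by linarith
    _ ≤ ‖(1:ℂ)‖ - ‖Complex.exp (-(1 + a + r) * cD q d)‖ := by norm_num
    _ ≤ ‖1 - Complex.exp (-(1 + a + r) * cD q d)‖ := norm_sub_norm_le _ _

lemma u_ne (hq : 2 ≤ q) (hd : 1 ≤ d) (ha : 0 ≤ a.re) (hr : 0 ≤ r.re) :
    1 - Complex.exp (-(1 + a + r) * cD q d) ≠ 0 := by
  intro h
  have := norm_u_lb (r := r) (a := a) hq hd ha hr
  rw [h, norm_zero] at this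
  linarith

lemma norm_u_inv_le (hq : 2 ≤ q) (hd : 1 ≤ d) (ha : 0 ≤ a.re) (hr : 0 ≤ r.re) :
    ‖(1 - Complex.exp (-(1 + a + r) * cD q d))⁻¹‖ ≤ 2 := by
  rw [norm_inv]
  have h := norm_u_lb (r := r) (a := a) hq hd ha hr
  rw [inv_le_comm₀ (by linarith) (by norm_num)]
  linarith

lemma norm_cD (hq : 2 ≤ q) (hd : 1 ≤ d) : ‖cD q d‖ = tR q d := by
  rw [cD_eq, Complex.norm_real, Real.norm_eq_abs]
  exact abs_of_pos (tR_pos hq hd)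

lemma tR_le_nR (hq : 2 ≤ q) (hd : 1 ≤ d) : tR q d ≤ nR q d := by
  rw [← exp_tR hq]
  have := Real.add_one_le_exp (tR q d)
  linarith

end Bounds

section MVT

open ContinuousLinearMap in
/-- Mean value bound: `‖e^{-z t} − e^{-w t}‖ ≤ t‖z − w‖` for `Re z, Re w ≥ 0`, `t ≥ 0`. -/
lemma norm_cexp_sub_cexp_le {t : ℝ} (ht : 0 ≤ t) {z w : ℂ} (hz : 0 ≤ z.re) (hw : 0 ≤ w.re) :
    ‖Complex.exp (-z * (t : ℂ)) - Complex.exp (-w * (t : ℂ))‖ ≤ t * ‖z - w‖ := by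
  set s : Set ℂ := {x : ℂ | 0 ≤ x.re} with hs
  have hconv : Convex ℝ s := convex_halfSpace_re_ge 0
  set f : ℂ → ℂ := fun x => Complex.exp (-x * (t : ℂ)) with hf
  set f' : ℂ → ℂ →L[ℝ] ℂ := fun x =>
    ((1 : ℂ →L[ℂ] ℂ).smulRight (Complex.exp (-x * (t : ℂ)) * (-1 * (t : ℂ)))).restrictScalars ℝ
    with hf'
  have hder : ∀ x ∈ s, HasFDerivWithinAt f (f' x) s x := by
    intro x hx
    have h1 : HasDerivAt (fun x : ℂ => -x * (t : ℂ)) (-1 * (t : ℂ)) x :=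
      (hasDerivAt_id x).neg.mul_const _
    have h2 := h1.cexp
    exact ((h2.hasFDerivAt).restrictScalars ℝ).hasFDerivWithinAt
  have hbound : ∀ x ∈ s, ‖f' x‖ ≤ t := by
    intro x hx
    rw [hf', ContinuousLinearMap.norm_restrictScalars, ContinuousLinearMap.norm_smulRight_apply]
    have hone : ‖(1 : ℂ →L[ℂ] ℂ)‖ = 1 := norm_one
    rw [hone, one_mul, norm_mul]
    have h1 : ‖Complex.exp (-x * (t:ℂ))‖ ≤ 1 := by
      rw [Complex.norm_exp, Real.exp_le_one_iff]
      have : (-x * (t:ℂ)).re = -x.re * t := by simp [Complex.mul_re]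
      rw [this]
      exact mul_nonpos_of_nonpos_of_nonneg (by simpa [hs] using hx) ht
    have h2 : ‖(-1 * (t:ℂ))‖ = t := by
      rw [neg_one_mul, norm_neg, Complex.norm_real, Real.norm_eq_abs, _root_.abs_of_nonneg ht]
    calc ‖Complex.exp (-x * (t:ℂ))‖ * ‖(-1 * (t:ℂ))‖ ≤ 1 * ‖(-1 * (t:ℂ))‖ := by
          apply mul_le_mul_of_nonneg_right h1 (norm_nonneg _)
      _ = t := by rw [one_mul, h2]
  have := hconv.norm_image_sub_le_of_norm_hasFDerivWithin_le hder hbound hw hz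
  exact this

end MVT

section AlgebraIdent

lemma alg_ident (N x y : ℂ) (hN : N ≠ 0) (hm : N + 1 ≠ 0) (hu : 1 - N⁻¹ * x ≠ 0) :
    (1 - N⁻¹ * x)⁻¹ * (1 - (N + 1)⁻¹ * (N⁻¹ * y) - (N + 1)⁻¹ * x) =
      1 + (1 - N⁻¹ * x)⁻¹ * (x - y) * (N⁻¹ * (N + 1)⁻¹) := by
  have hKey : (1 - (N + 1)⁻¹ * (N⁻¹ * y) - (N + 1)⁻¹ * x) =
      (1 - N⁻¹ * x) + (x - y) * (N⁻¹ * (N + 1)⁻¹) := by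
    field_simp
    ring
  rw [hKey, mul_add, inv_mul_cancel₀ hu]
  ring

end AlgebraIdent

section LocalLemmas

variable {q d : ℕ} {r a : ℂ}

lemma exp_split1 (hq : 2 ≤ q) :
    Complex.exp (-(1 + a + r) * cD q d) = (nC q d)⁻¹ * Complex.exp (-(a + r) * cD q d) := by
  rw [← exp_cD (d := d) hq, ← Complex.exp_neg, ← Complex.exp_add]
  congr 1; ring

lemma exp_split2 (hq : 2 ≤ q) :
    Complex.exp (-(1 + 2 * a) * cD q d) = (nC q d)⁻¹ * Complex.exp (-(2 * a) * cD q d) := by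
  rw [← exp_cD (d := d) hq, ← Complex.exp_neg, ← Complex.exp_add]
  congr 1; ring

lemma ADlocal_eq {Fq : Type*} [Field Fq] [Fintype Fq] (r a : ℂ) (P : Polynomial Fq)
    (hq : 2 ≤ Fintype.card Fq) (hd : 1 ≤ P.natDegree) (ha : 0 ≤ a.re) (hr : 0 ≤ r.re) :
    ADlocal Fq a r P = Gl (Fintype.card Fq) P.natDegree r a := by
  set q := Fintype.card Fq with hqdef
  set d := P.natDegree with hddef
  have hu : 1 - (nC q d)⁻¹ * Complex.exp (-(a + r) * cD q d) ≠ 0 := by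
    rw [← exp_split1 hq]
    exact u_ne hq hd ha hr
  rw [ADlocal, Gl]
  rw [show ((P.natDegree : ℂ) * (Real.log (Fintype.card Fq) : ℝ)) = cD q d from rfl]
  rw [show ((((Fintype.card Fq : ℝ) ^ P.natDegree : ℝ)) : ℂ) = nC q d from rfl]
  rw [exp_split1 hq, exp_split2 hq]
  exact alg_ident (nC q d) _ _ (nC_ne hq) (m_ne hq) hu

lemma hasDerivAt_Gl (hq : 2 ≤ q) (hd : 1 ≤ d) (hr : 0 ≤ r.re) (ha : 0 ≤ a.re) :
    HasDerivAt (fun z => Gl q d r z) (Dl q d r a) a := by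
  have hune : 1 - Complex.exp (-(1 + a + r) * cD q d) ≠ 0 := u_ne hq hd ha hr
  have h1i : HasDerivAt (fun z : ℂ => -(1 + z + r) * cD q d) (-cD q d) a := by
    have := (((hasDerivAt_id a).const_add 1).add_const r).neg.mul_const (cD q d)
    exact this.congr_deriv (by ring)
  have hE1 := h1i.cexp
  have hu : HasDerivAt (fun z : ℂ => 1 - Complex.exp (-(1 + z + r) * cD q d))
      (-(Complex.exp (-(1 + a + r) * cD q d) * -cD q d)) a := hE1.const_sub 1
  have hui := hu.inv hune
  have h3i : HasDerivAt (fun z : ℂ => -(z + r) * cD q d) (-cD q d) a := by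
    have := ((hasDerivAt_id a).add_const r).neg.mul_const (cD q d)
    exact this.congr_deriv (by ring)
  have hE3 := h3i.cexp
  have h4i : HasDerivAt (fun z : ℂ => -(2 * z) * cD q d) (-(2 * cD q d)) a := by
    have := ((hasDerivAt_id a).const_mul 2).neg.mul_const (cD q d)
    exact this.congr_deriv (by ring)
  have hE4 := h4i.cexp
  have hw := hE3.sub hE4
  have hmain := ((hui.mul hw).mul_const ((nC q d)⁻¹ * (nC q d + 1)⁻¹)).const_add 1
  refine hmain.congr_deriv ?_
  rw [Dl]; simp only [Pi.sub_apply, Pi.inv_apply]; ring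

lemma Gl_r : Gl q d r r = 1 := by
  rw [Gl]
  rw [show -(r + r) * cD q d = -(2 * r) * cD q d by ring]
  simp

lemma Dl_r (hq : 2 ≤ q) (hd : 1 ≤ d) (hr : 0 < r.re) :
    Dl q d r r = ((tR q d : ℝ) : ℂ) /
      ((Complex.exp ((1 + 2 * r) * cD q d) - 1) * (nC q d + 1)) := by
  set X := Complex.exp ((1 + 2 * r) * cD q d) with hX
  have hXne : X ≠ 0 := Complex.exp_ne_zero _
  have hX1 : X - 1 ≠ 0 := by
    have hnorm : 1 < ‖X‖ := by
      rw [hX, norm_exp_mul_cD, Real.one_lt_exp_iff]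
      exact mul_pos (by simp [Complex.add_re, Complex.mul_re]; nlinarith [hr]) (tR_pos hq hd)
    intro h
    rw [sub_eq_zero] at h
    rw [h, norm_one] at hnorm
    exact lt_irrefl _ hnorm
  have huX : 1 - X⁻¹ ≠ 0 := by
    intro h
    rw [sub_eq_zero, eq_comm, inv_eq_one] at h
    exact hX1 (by rw [h]; ring)
  have hE1r : Complex.exp (-(1 + r + r) * cD q d) = X⁻¹ := by
    rw [← Complex.exp_neg]; congr 1; ring
  have hE3r : Complex.exp (-(r + r) * cD q d) = nC q d * X⁻¹ := by
    rw [← Complex.exp_neg, ← exp_cD (d := d) hq, ← Complex.exp_add]; congr 1; ring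
  have hE4r : Complex.exp (-(2 * r) * cD q d) = nC q d * X⁻¹ := by
    rw [← Complex.exp_neg, ← exp_cD (d := d) hq, ← Complex.exp_add]; congr 1; ring
  rw [Dl, hE1r, hE3r, hE4r, ← cD_eq]
  field_simp [nC_ne hq, m_ne hq]
  ring

end LocalLemmas

section NormBounds

variable {q d : ℕ} {r a : ℂ}

lemma norm_E3_sub_E4 (hq : 2 ≤ q) (hd : 1 ≤ d) (hr : 0 ≤ r.re) (ha : 0 ≤ a.re) :
    ‖Complex.exp (-(a + r) * cD q d) - Complex.exp (-(2 * a) * cD q d)‖ ≤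
      tR q d * ‖a - r‖ := by
  have ht := (tR_pos hq hd).le
  have h1 : 0 ≤ (a + r).re := by simp only [Complex.add_re]; linarith
  have h2 : 0 ≤ (2 * a).re := by
    have : (2 * a).re = 2 * a.re := by simp [Complex.mul_re]
    rw [this]; linarith
  have := norm_cexp_sub_cexp_le (t := tR q d) ht h1 h2
  rw [← cD_eq] at this
  calc ‖Complex.exp (-(a + r) * cD q d) - Complex.exp (-(2 * a) * cD q d)‖
      ≤ tR q d * ‖a + r - 2 * a‖ := this
    _ = tR q d * ‖a - r‖ := by rw [show a + r - 2 * a = -(a - r) by ring, norm_neg]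

lemma norm_Gl_sub_one (hq : 2 ≤ q) (hd : 1 ≤ d) (hr : 0 ≤ r.re) (ha : 0 ≤ a.re) :
    ‖Gl q d r a - 1‖ ≤ 2 * (tR q d * ‖a - r‖) * ((nR q d)⁻¹ * (nR q d)⁻¹) := by
  have hn := nR_pos (d := d) (q := q) hq
  rw [Gl, add_sub_cancel_left]
  rw [norm_mul, norm_mul, norm_mul, norm_inv (nC q d)]
  have b1 := norm_u_inv_le (r := r) (a := a) hq hd ha hr
  have b2 := norm_E3_sub_E4 (r := r) (a := a) hq hd hr ha
  have b3 : ‖nC q d‖⁻¹ = (nR q d)⁻¹ := by rw [norm_nC hq]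
  have b4 := norm_m_inv_le (d := d) hq
  rw [b3]
  have ht := (tR_pos hq hd).le
  gcongr ?_ * ?_ * (?_ * ?_) <;> first | exact le_refl _ | exact b1 | exact b2 | exact b4

lemma norm_Gl_sub_one_le_quarter (hq : 2 ≤ q) (hd : 1 ≤ d) (hr : 0 ≤ r.re) (ha : 0 ≤ a.re)
    (hdist : ‖a - r‖ ≤ 1/4) : ‖Gl q d r a - 1‖ ≤ 1/4 := by
  have h1 := norm_Gl_sub_one (r := r) (a := a) hq hd hr ha
  have h2 := tR_le_nR (q := q) (d := d) hq hd
  have h3 := nR_inv_le_half (q := q) (d := d) hq hd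
  have hn := nR_pos (d := d) (q := q) hq
  have ht := (tR_pos hq hd).le
  have hnn : 0 ≤ ‖a - r‖ := norm_nonneg _
  have key : 2 * (tR q d * ‖a - r‖) * ((nR q d)⁻¹ * (nR q d)⁻¹) ≤ 1/4 := by
    have e1 : tR q d * (nR q d)⁻¹ ≤ 1 := by
      rw [← div_eq_mul_inv, div_le_one hn]; exact h2
    calc 2 * (tR q d * ‖a - r‖) * ((nR q d)⁻¹ * (nR q d)⁻¹)
        = 2 * ‖a - r‖ * (tR q d * (nR q d)⁻¹) * (nR q d)⁻¹ := by ring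
      _ ≤ 2 * (1/4) * 1 * (1/2) := by
          apply mul_le_mul (by apply mul_le_mul _ e1 _ _; gcongr; norm_num; positivity; positivity) h3 (by positivity) (by norm_num)
      _ = 1/4 := by norm_num
  linarith

end NormBounds

section DlBound

variable {q d : ℕ} {r a : ℂ}

lemma norm_Dl_le (hq : 2 ≤ q) (hd : 1 ≤ d) (hr : 0 ≤ r.re) (ha : 0 ≤ a.re)
    (hdist : ‖a - r‖ ≤ 1/4) :
    ‖Dl q d r a‖ ≤ 7 * tR q d * ((nR q d)⁻¹ * (nR q d)⁻¹) := by
  have hn := nR_pos (d := d) (q := q) hq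
  have htp := tR_pos (q := q) (d := d) hq hd
  have ht := htp.le
  set E1 := Complex.exp (-(1 + a + r) * cD q d) with hE1def
  set E3 := Complex.exp (-(a + r) * cD q d) with hE3def
  set E4 := Complex.exp (-(2 * a) * cD q d) with hE4def
  set u := 1 - E1 with hudef
  have hE1 : ‖E1‖ ≤ (nR q d)⁻¹ := norm_E1_le hq hd ha hr
  have hE3 : ‖E3‖ ≤ 1 := norm_E3_le hq hd ha hr
  have hE4 : ‖E4‖ ≤ 1 := norm_E4_le hq hd ha
  have hul : 1/2 ≤ ‖u‖ := norm_u_lb hq hd ha hr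
  have hui : ‖u⁻¹‖ ≤ 2 := norm_u_inv_le hq hd ha hr
  have hb2 : ‖E3 - E4‖ ≤ tR q d * (1/4) := by
    refine (norm_E3_sub_E4 hq hd hr ha).trans ?_
    exact mul_le_mul_of_nonneg_left hdist ht
  have hK : ‖(nC q d)⁻¹ * (nC q d + 1)⁻¹‖ ≤ (nR q d)⁻¹ * (nR q d)⁻¹ := by
    rw [norm_mul, norm_inv, norm_nC hq]
    exact mul_le_mul_of_nonneg_left (norm_m_inv_le hq) (by positivity)
  have hA : ‖-(cD q d * E1) / u ^ 2‖ ≤ tR q d * (nR q d)⁻¹ * 4 := by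
    rw [norm_div, norm_neg, norm_mul, norm_pow, norm_cD hq hd]
    calc tR q d * ‖E1‖ / ‖u‖ ^ 2
        ≤ tR q d * (nR q d)⁻¹ / (1/4) := by
          apply div_le_div₀ (by positivity) (by gcongr) (by norm_num)
          nlinarith
      _ = tR q d * (nR q d)⁻¹ * 4 := by ring
  have hS1 : ‖-(cD q d * E1) / u ^ 2 * (E3 - E4)‖ ≤
      tR q d * (nR q d)⁻¹ * 4 * (tR q d * (1/4)) := by
    rw [norm_mul]
    exact mul_le_mul hA hb2 (norm_nonneg _) (by positivity)
  have hS2 : ‖u⁻¹ * (2 * cD q d * E4 - cD q d * E3)‖ ≤ 2 * (2 * tR q d + tR q d) := by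
    rw [norm_mul]
    have hin : ‖2 * cD q d * E4 - cD q d * E3‖ ≤ 2 * tR q d + tR q d := by
      refine (norm_sub_le _ _).trans ?_
      rw [norm_mul, norm_mul, norm_mul, norm_cD hq hd]
      have h2 : ‖(2:ℂ)‖ = 2 := by norm_num
      rw [h2]
      have e4 : 2 * tR q d * ‖E4‖ ≤ 2 * tR q d * 1 := by gcongr
      have e3 : tR q d * ‖E3‖ ≤ tR q d * 1 := by gcongr
      nlinarith
    exact mul_le_mul hui hin (norm_nonneg _) (by norm_num)
  have e1 : tR q d * (nR q d)⁻¹ ≤ 1 := by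
    rw [← div_eq_mul_inv, div_le_one hn]; exact tR_le_nR hq hd
  rw [Dl, norm_mul]
  calc ‖(-(cD q d * E1) / u ^ 2 * (E3 - E4) + u⁻¹ * (2 * cD q d * E4 - cD q d * E3))‖ *
        ‖(nC q d)⁻¹ * (nC q d + 1)⁻¹‖
      ≤ (tR q d * (nR q d)⁻¹ * 4 * (tR q d * (1/4)) + 2 * (2 * tR q d + tR q d)) *
        ((nR q d)⁻¹ * (nR q d)⁻¹) := by
        apply mul_le_mul _ hK (norm_nonneg _) (by positivity)
        exact (norm_add_le _ _).trans (add_le_add hS1 hS2)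
    _ ≤ 7 * tR q d * ((nR q d)⁻¹ * (nR q d)⁻¹) := by
        have hi : (0:ℝ) ≤ (nR q d)⁻¹ := by positivity
        nlinarith [mul_le_mul_of_nonneg_right e1 ht, sq_nonneg ((nR q d)⁻¹)]

end DlBound

section Counting

variable {Fq : Type*} [Field Fq] [Fintype Fq]

lemma card_filter_natDegree_le (s : Finset {P : Polynomial Fq // P.Monic ∧ Irreducible P})
    (d : ℕ) :
    (s.filter (fun P => P.1.natDegree = d)).card ≤ Fintype.card Fq ^ (d + 1) := by
  classical
  have := Finset.card_le_card_of_injOn (f := fun (P : {P : Polynomial Fq // P.Monic ∧ Irreducible P}) (i : Fin (d + 1)) => P.1.coeff i)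
    (s := s.filter (fun P => P.1.natDegree = d)) (t := Finset.univ)
    (fun P _ => Finset.mem_univ _) ?_
  · calc (s.filter (fun P => P.1.natDegree = d)).card
        ≤ (Finset.univ : Finset (Fin (d + 1) → Fq)).card := this
      _ = Fintype.card Fq ^ (d + 1) := by
          rw [Finset.card_univ, Fintype.card_fun, Fintype.card_fin]
  · intro P hP Q hQ h
    simp only [Finset.coe_filter, Set.mem_setOf_eq] at hP hQ
    apply Subtype.ext
    ext m
    by_cases hm : m < d + 1
    · exact congr_fun h ⟨m, hm⟩
    · push_neg at hm
      rw [Polynomial.coeff_eq_zero_of_natDegree_lt, Polynomial.coeff_eq_zero_of_natDegree_lt]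
      · rw [hQ.2]; omega
      · rw [hP.2]; omega

lemma summable_of_degree_bound {F : ℕ → ℝ} (hF0 : ∀ d, 0 ≤ F d)
    (hF : Summable fun d => (Fintype.card Fq : ℝ) ^ (d + 1) * F d) :
    Summable (fun P : {P : Polynomial Fq // P.Monic ∧ Irreducible P} => F P.1.natDegree) := by
  classical
  apply summable_of_sum_le (c := ∑' d, (Fintype.card Fq : ℝ) ^ (d + 1) * F d)
    (fun P => hF0 _)
  intro s
  have hcomp := Finset.sum_comp (s := s) (fun d => F d)
    (fun P : {P : Polynomial Fq // P.Monic ∧ Irreducible P} => P.1.natDegree)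
  rw [hcomp]
  refine le_trans (Finset.sum_le_sum ?_) (Summable.sum_le_tsum _ (fun d _ => mul_nonneg (by positivity) (hF0 d)) hF)
  intro b _
  rw [nsmul_eq_mul]
  apply mul_le_mul_of_nonneg_right _ (hF0 b)
  calc ((s.filter (fun P => P.1.natDegree = b)).card : ℝ)
      ≤ ((Fintype.card Fq ^ (b + 1) : ℕ) : ℝ) := by exact_mod_cast card_filter_natDegree_le s b
    _ = (Fintype.card Fq : ℝ) ^ (b + 1) := by push_cast; ring

lemma summable_main (hq : 2 ≤ Fintype.card Fq) (C : ℝ) (hC : 0 ≤ C) :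
    Summable (fun P : {P : Polynomial Fq // P.Monic ∧ Irreducible P} =>
      C * tR (Fintype.card Fq) P.1.natDegree *
        ((nR (Fintype.card Fq) P.1.natDegree)⁻¹ * (nR (Fintype.card Fq) P.1.natDegree)⁻¹)) := by
  set q := Fintype.card Fq with hqdef
  have hq1 : (1:ℝ) < q := one_lt_qR hq
  have hq0 : (0:ℝ) < q := by linarith
  apply summable_of_degree_bound (F := fun d => C * tR q d * ((nR q d)⁻¹ * (nR q d)⁻¹))
  · intro d
    have h1 : 0 ≤ tR q d := by
      rw [tR]
      have := Real.log_nonneg hq1.le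
      positivity
    have h2 : 0 < nR q d := nR_pos hq
    positivity
  · have key : (fun d => (q : ℝ) ^ (d + 1) * (C * tR q d * ((nR q d)⁻¹ * (nR q d)⁻¹))) =
        (fun d : ℕ => (C * Real.log q * q) * ((d : ℝ) * ((q : ℝ)⁻¹) ^ d)) := by
      funext d
      rw [tR, nR]
      rw [inv_pow]
      field_simp
      ring
    rw [key]
    apply Summable.mul_left
    have hlt : ‖(q:ℝ)⁻¹‖ < 1 := by
      rw [Real.norm_eq_abs, abs_of_pos (by positivity), inv_lt_one_iff₀]
      right; exact hq1
    have := summable_norm_pow_mul_geometric_of_norm_lt_one 1 hlt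
    apply Summable.of_norm
    simpa using this

end Counting


/-- for `Re(r) > 0`, `∂A_D/∂α` at `α = γ = r` equals
`Σ_P log|P| / ((|P|^{1+2r} − 1)(|P|+1))`, the series converging absolutely;
here `log|P| = deg P · log q`. -/
theorem stmt_18 {Fq : Type*} [Field Fq] [Fintype Fq] (hq : Odd (Fintype.card Fq))
    (r : ℂ) (hr : 0 < r.re) :
    Summable (fun P : {P : Polynomial Fq // P.Monic ∧ Irreducible P} =>
      (((P.1.natDegree : ℝ) * Real.log (Fintype.card Fq) : ℝ) : ℂ) /
        ((Complex.exp ((1 + 2 * r) * ((P.1.natDegree : ℂ) * Real.log (Fintype.card Fq))) - 1) *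
          ((((Fintype.card Fq : ℝ) ^ P.1.natDegree : ℝ) : ℂ) + 1))) ∧
    HasDerivAt (fun a : ℂ => AD Fq a r)
      (∑' P : {P : Polynomial Fq // P.Monic ∧ Irreducible P},
        (((P.1.natDegree : ℝ) * Real.log (Fintype.card Fq) : ℝ) : ℂ) /
          ((Complex.exp ((1 + 2 * r) * ((P.1.natDegree : ℂ) * Real.log (Fintype.card Fq))) - 1) *
            ((((Fintype.card Fq : ℝ) ^ P.1.natDegree : ℝ) : ℂ) + 1)))
      r := by
  classical
  set q := Fintype.card Fq with hqdef
  have hq2 : 2 ≤ q := Fintype.one_lt_card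
  have hr0 : 0 ≤ r.re := hr.le
  have hdP : ∀ P : {P : Polynomial Fq // P.Monic ∧ Irreducible P}, 1 ≤ P.1.natDegree :=
    fun P => P.2.2.natDegree_pos
  set ρ := min (r.re / 2) (1/4) with hρdef
  have hρ0 : 0 < ρ := lt_min (by linarith) (by norm_num)
  have hρ4 : ρ ≤ 1/4 := min_le_right _ _
  have hρr : ρ ≤ r.re / 2 := min_le_left _ _
  have hball : ∀ y ∈ Metric.ball r ρ, 0 ≤ y.re ∧ ‖y - r‖ ≤ 1/4 := by
    intro y hy
    rw [Metric.mem_ball, Complex.dist_eq] at hy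
    have h1 : |(y - r).re| ≤ ‖y - r‖ := Complex.abs_re_le_norm _
    have h2 : (y - r).re = y.re - r.re := by simp [Complex.sub_re]
    have h3 : ‖y - r‖ = ‖y - r‖ := rfl
    constructor
    · rw [h2] at h1
      have := abs_le.1 h1
      linarith [this.1]
    · rw [h3]; linarith
  -- bundled data
  set g' : {P : Polynomial Fq // P.Monic ∧ Irreducible P} → ℂ → ℂ :=
    fun P z => Dl q P.1.natDegree r z / Gl q P.1.natDegree r z with hg'def
  set u : {P : Polynomial Fq // P.Monic ∧ Irreducible P} → ℝ :=
    fun P => 20 * tR q P.1.natDegree * ((nR q P.1.natDegree)⁻¹ * (nR q P.1.natDegree)⁻¹)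
    with hudef
  have hu : Summable u := summable_main hq2 20 (by norm_num)
  have key : ∀ (P : {P : Polynomial Fq // P.Monic ∧ Irreducible P}), ∀ y ∈ Metric.ball r ρ,
      ‖Gl q P.1.natDegree r y - 1‖ ≤ 1/4 := fun P y hy =>
    norm_Gl_sub_one_le_quarter hq2 (hdP P) hr0 (hball y hy).1 (hball y hy).2
  have hGlb : ∀ (P : {P : Polynomial Fq // P.Monic ∧ Irreducible P}), ∀ y ∈ Metric.ball r ρ,
      3/4 ≤ ‖Gl q P.1.natDegree r y‖ := by
    intro P y hy
    have h1 := key P y hy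
    have h2 : ‖(1:ℂ)‖ - ‖Gl q P.1.natDegree r y - 1‖ ≤ ‖Gl q P.1.natDegree r y‖ := by
      calc ‖(1:ℂ)‖ - ‖Gl q P.1.natDegree r y - 1‖
          ≤ ‖1 - (Gl q P.1.natDegree r y - 1 + 1 - Gl q P.1.natDegree r y) - (1 - Gl q P.1.natDegree r y)‖ := by
            rw [show (Gl q P.1.natDegree r y - 1 + 1 - Gl q P.1.natDegree r y) = 0 by ring]
            rw [show (1 : ℂ) - 0 - (1 - Gl q P.1.natDegree r y) = Gl q P.1.natDegree r y by ring]
            have := norm_sub_norm_le (1:ℂ) (1 - Gl q P.1.natDegree r y)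
            calc ‖(1:ℂ)‖ - ‖Gl q P.1.natDegree r y - 1‖
                = ‖(1:ℂ)‖ - ‖1 - Gl q P.1.natDegree r y‖ := by rw [norm_sub_rev]
              _ ≤ ‖1 - (1 - Gl q P.1.natDegree r y)‖ := norm_sub_norm_le _ _
              _ = ‖Gl q P.1.natDegree r y‖ := by rw [show (1:ℂ) - (1 - Gl q P.1.natDegree r y) = Gl q P.1.natDegree r y by ring]
      _ = ‖Gl q P.1.natDegree r y‖ := by
            rw [show (Gl q P.1.natDegree r y - 1 + 1 - Gl q P.1.natDegree r y) = 0 by ring]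
            rw [show (1 : ℂ) - 0 - (1 - Gl q P.1.natDegree r y) = Gl q P.1.natDegree r y by ring]
    rw [norm_one] at h2
    linarith
  have hGne : ∀ (P : {P : Polynomial Fq // P.Monic ∧ Irreducible P}), ∀ y ∈ Metric.ball r ρ,
      Gl q P.1.natDegree r y ≠ 0 := by
    intro P y hy h0
    have := hGlb P y hy
    rw [h0, norm_zero] at this
    linarith
  have hslit : ∀ (P : {P : Polynomial Fq // P.Monic ∧ Irreducible P}), ∀ y ∈ Metric.ball r ρ,
      Gl q P.1.natDegree r y ∈ Complex.slitPlane := by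
    intro P y hy
    have h1 : ‖Gl q P.1.natDegree r y - 1‖ < 1 := lt_of_le_of_lt (key P y hy) (by norm_num)
    have := Complex.mem_slitPlane_of_norm_lt_one h1
    rwa [add_sub_cancel] at this
  have hgd : ∀ (P : {P : Polynomial Fq // P.Monic ∧ Irreducible P}), ∀ y ∈ Metric.ball r ρ,
      HasDerivAt (fun z => Complex.log (Gl q P.1.natDegree r z)) (g' P y) y := by
    intro P y hy
    exact (hasDerivAt_Gl hq2 (hdP P) hr0 (hball y hy).1).clog (hslit P y hy)
  have hgb : ∀ (P : {P : Polynomial Fq // P.Monic ∧ Irreducible P}), ∀ y ∈ Metric.ball r ρ,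
      ‖g' P y‖ ≤ u P := by
    intro P y hy
    rw [hg'def]
    simp only [norm_div]
    have hDl := norm_Dl_le hq2 (hdP P) hr0 (hball y hy).1 (hball y hy).2
    have hGl := hGlb P y hy
    have htp := (tR_pos (q := q) (d := P.1.natDegree) hq2 (hdP P)).le
    have hnn : (0:ℝ) ≤ (nR q P.1.natDegree)⁻¹ := inv_nonneg.2 (nR_pos hq2).le
    calc ‖Dl q P.1.natDegree r y‖ / ‖Gl q P.1.natDegree r y‖
        ≤ (7 * tR q P.1.natDegree * ((nR q P.1.natDegree)⁻¹ * (nR q P.1.natDegree)⁻¹)) / (3/4) :=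
          div_le_div₀ (by positivity) hDl (by norm_num) hGl
      _ ≤ u P := by
          rw [hudef]
          rw [div_le_iff₀ (by norm_num : (0:ℝ) < 3/4)]
          nlinarith [mul_nonneg htp (mul_nonneg hnn hnn)]
  have hg0 : Summable (fun P : {P : Polynomial Fq // P.Monic ∧ Irreducible P} =>
      Complex.log (Gl q P.1.natDegree r r)) := by
    have hz : (fun P : {P : Polynomial Fq // P.Monic ∧ Irreducible P} =>
        Complex.log (Gl q P.1.natDegree r r)) = fun _ => 0 := by
      funext P; rw [Gl_r, Complex.log_one]
    rw [hz]; exact summable_zero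
  have hS := hasDerivAt_tsum_of_isPreconnected hu Metric.isOpen_ball
    (convex_ball r ρ).isPreconnected hgd hgb (Metric.mem_ball_self hρ0) hg0
    (Metric.mem_ball_self hρ0)
  have hΦ := hS.cexp
  have hzero : (∑' P : {P : Polynomial Fq // P.Monic ∧ Irreducible P},
      Complex.log (Gl q P.1.natDegree r r)) = 0 := by
    rw [show (fun P : {P : Polynomial Fq // P.Monic ∧ Irreducible P} =>
        Complex.log (Gl q P.1.natDegree r r)) = fun _ => 0 by
      funext P; rw [Gl_r, Complex.log_one]]
    exact tsum_zero
  rw [hzero, Complex.exp_zero, one_mul] at hΦ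
  have hlogsum : ∀ y ∈ Metric.ball r ρ,
      Summable (fun P : {P : Polynomial Fq // P.Monic ∧ Irreducible P} =>
        Complex.log (Gl q P.1.natDegree r y)) := by
    intro y hy
    apply Summable.of_norm_bounded hu
    intro P
    have h1 : ‖Gl q P.1.natDegree r y - 1‖ ≤ 1/2 := le_trans (key P y hy) (by norm_num)
    have h2 : ‖Complex.log (Gl q P.1.natDegree r y)‖ ≤ (3/2) * ‖Gl q P.1.natDegree r y - 1‖ := by
      have := Complex.norm_log_one_add_half_le_self h1
      rwa [add_sub_cancel] at this
    have h3 := norm_Gl_sub_one hq2 (hdP P) hr0 (hball y hy).1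
    have h4 : 2 * (tR q P.1.natDegree * ‖y - r‖) * ((nR q P.1.natDegree)⁻¹ * (nR q P.1.natDegree)⁻¹)
        ≤ (2/3) * u P := by
      rw [hudef]
      have htp := (tR_pos (q := q) (d := P.1.natDegree) hq2 (hdP P)).le
      have hnn : (0:ℝ) ≤ (nR q P.1.natDegree)⁻¹ * (nR q P.1.natDegree)⁻¹ :=
        mul_nonneg (inv_nonneg.2 (nR_pos hq2).le) (inv_nonneg.2 (nR_pos hq2).le)
      have h5 : ‖y - r‖ ≤ 1/4 := (hball y hy).2
      nlinarith [mul_nonneg htp hnn, norm_nonneg (y - r), mul_nonneg (mul_nonneg htp (norm_nonneg (y-r))) hnn]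
    calc ‖Complex.log (Gl q P.1.natDegree r y)‖
        ≤ (3/2) * ‖Gl q P.1.natDegree r y - 1‖ := h2
      _ ≤ (3/2) * ((2/3) * u P) := by
          apply mul_le_mul_of_nonneg_left (le_trans h3 h4) (by norm_num)
      _ = u P := by ring
  have hprod : ∀ y ∈ Metric.ball r ρ, AD Fq y r =
      Complex.exp (∑' P : {P : Polynomial Fq // P.Monic ∧ Irreducible P},
        Complex.log (Gl q P.1.natDegree r y)) := by
    intro y hy
    have h1 : AD Fq y r = ∏' P : {P : Polynomial Fq // P.Monic ∧ Irreducible P},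
        Gl q P.1.natDegree r y := by
      rw [AD]
      exact tprod_congr fun P => ADlocal_eq r y P.1 hq2 (hdP P) (hball y hy).1 hr0
    have h3 := Complex.cexp_tsum_eq_tprod
      (f := fun (P : {P : Polynomial Fq // P.Monic ∧ Irreducible P}) =>
        Gl q P.1.natDegree r y)
      (fun P => hGne P y hy) (hlogsum y hy)
    rw [h1]; exact h3.symm
  have hfinal : HasDerivAt (fun a : ℂ => AD Fq a r)
      (∑' P : {P : Polynomial Fq // P.Monic ∧ Irreducible P}, g' P r) r := by
    apply hΦ.congr_of_eventuallyEq
    filter_upwards [Metric.isOpen_ball.mem_nhds (Metric.mem_ball_self hρ0)] with y hy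
    exact hprod y hy
  have hg'T : ∀ P : {P : Polynomial Fq // P.Monic ∧ Irreducible P},
      g' P r = (((P.1.natDegree : ℝ) * Real.log q : ℝ) : ℂ) /
        ((Complex.exp ((1 + 2 * r) * ((P.1.natDegree : ℂ) * Real.log q)) - 1) *
          ((((q : ℝ) ^ P.1.natDegree : ℝ) : ℂ) + 1)) := by
    intro P
    rw [hg'def]
    show Dl q P.1.natDegree r r / Gl q P.1.natDegree r r = _
    rw [Gl_r, div_one, Dl_r hq2 (hdP P) hr]
    rfl
  constructor
  · apply Summable.of_norm_bounded hu
    intro P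
    rw [← hg'T P]
    exact hgb P r (Metric.mem_ball_self hρ0)
  · have := hfinal
    rw [show (∑' P : {P : Polynomial Fq // P.Monic ∧ Irreducible P}, g' P r) =
        ∑' P : {P : Polynomial Fq // P.Monic ∧ Irreducible P},
          (((P.1.natDegree : ℝ) * Real.log q : ℝ) : ℂ) /
            ((Complex.exp ((1 + 2 * r) * ((P.1.natDegree : ℂ) * Real.log q)) - 1) *
              ((((q : ℝ) ^ P.1.natDegree : ℝ) : ℂ) + 1)) from tsum_congr hg'T] at this
    exact this
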